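/- arXiv:1004.5236 — 2 statements merged into one kernel-verified Lean document; each statement's English description precedes it below -/
import Mathlib

section
/- There is a constant K > 0 such that for every n ≥ 2 and every L with 1 ≤ L ≤ n^2, the cardinality of the set of n-operators f : (Fin n → Bool) → (Fin n → Bool) computable by some general boolean circuit on n inputs of size at most L is at most 2^(2 * n^2 * 4^((L : ℝ)/n) + n * 2^(n-1) + K * n^2 * Real.logb 2 n). -/
/-- A general boolean circuit on `n` inputs with `m` nodes: each gate computes an
arbitrary boolean function of its predecessors; there is no fanin/fanout restriction. -/
structure GenCircuit (n m : ℕ) where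
  hnm : n ≤ m
  pred : Fin m → Finset (Fin m)
  out : Fin n → Fin m
  val : (Fin n → Bool) → (Fin m → Bool)
  pred_lt : ∀ i : Fin m, ∀ j ∈ pred i, j < i
  pred_input : ∀ i : Fin m, (i : ℕ) < n → pred i = ∅
  val_input : ∀ (x : Fin n → Bool) (i : Fin m) (h : (i : ℕ) < n), val x i = x ⟨i, h⟩
  val_gate : ∀ i : Fin m, n ≤ (i : ℕ) → ∀ x y : Fin n → Bool,
    (∀ j ∈ pred i, val x j = val y j) → val x i = val y i

/-- The circuit computes the operator `f` if the value at the `i`-th output node is `f x i`. -/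
def GenCircuit.Computes {n m : ℕ} (Φ : GenCircuit n m)
    (f : (Fin n → Bool) → (Fin n → Bool)) : Prop :=
  ∀ (x : Fin n → Bool) (i : Fin n), Φ.val x (Φ.out i) = f x i

/-- The size of a circuit is its total number of wires. -/
def GenCircuit.size {n m : ℕ} (Φ : GenCircuit n m) : ℕ :=
  ∑ i : Fin m, (Φ.pred i).card

noncomputable def decV (n L : ℕ) (P : Fin L → Finset (Fin (n+2+L)))
    (H : ∀ b : Fin L, (Fin (min ((P b).card) n) → Bool) → Bool) :
    (i : ℕ) → (Fin n → Bool) → Bool := fun i x =>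
  if h : i < n then x ⟨i, h⟩
  else if i = n then false
  else if i = n + 1 then true
  else if hb : i - (n+2) < L then
    H ⟨i - (n+2), hb⟩ (fun j =>
      if _hk : (P ⟨i - (n+2), hb⟩).card ≤ n then
        let s : Fin (n+2+L) :=
          ((P ⟨i - (n+2), hb⟩).orderIsoOfFin rfl
            ⟨(j:ℕ), lt_of_lt_of_le j.2 (min_le_left _ _)⟩ : {x // x ∈ P ⟨i - (n+2), hb⟩})
        if _hs : (s:ℕ) < i then decV n L P H s x else false
      else x ⟨(j:ℕ), lt_of_lt_of_le j.2 (min_le_right _ _)⟩)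
  else false
termination_by i => i

namespace CircEnc

variable {n m : ℕ} (L : ℕ) (Φ : GenCircuit n m)

def gset : Finset (Fin m) := Finset.univ.filter (fun i => Φ.pred i ≠ ∅)

noncomputable def geq : Fin (gset Φ).card ≃o {x // x ∈ gset Φ} :=
  (gset Φ).orderIsoOfFin rfl

noncomputable def rho (ht : (gset Φ).card ≤ L) : Fin m → Fin (n+2+L) := fun i =>
  if h : (i:ℕ) < n then ⟨i, by omega⟩
  else if hg : i ∈ gset Φ then
    ⟨n+2+(((geq Φ).symm ⟨i,hg⟩ : Fin (gset Φ).card) : ℕ), by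
      have := (((geq Φ).symm ⟨i,hg⟩ : Fin (gset Φ).card)).isLt; omega⟩
  else if Φ.val (fun _ => false) i then ⟨n+1, by omega⟩ else ⟨n, by omega⟩

noncomputable def Pmap (ht : (gset Φ).card ≤ L) : Fin L → Finset (Fin (n+2+L)) := fun b =>
  if hb : (b:ℕ) < (gset Φ).card then
    ((Φ.pred ((geq Φ) ⟨b,hb⟩ : {x // x ∈ gset Φ})).image (rho L Φ ht))
  else ∅

noncomputable def pk (ht : (gset Φ).card ≤ L) (i : Fin m) (s : Fin (n+2+L)) : Fin m :=
  if hx : ∃ j', j' ∈ Φ.pred i ∧ rho L Φ ht j' = s then hx.choose else i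

lemma pk_spec (ht : (gset Φ).card ≤ L) (i : Fin m) (s : Fin (n+2+L))
    (hs : s ∈ (Φ.pred i).image (rho L Φ ht)) :
    pk L Φ ht i s ∈ Φ.pred i ∧ rho L Φ ht (pk L Φ ht i s) = s := by
  rw [Finset.mem_image] at hs
  obtain ⟨j', hj', hr⟩ := hs
  rw [pk, dif_pos ⟨j', hj', hr⟩]
  exact (Exists.choose_spec (⟨j', hj', hr⟩ : ∃ j', j' ∈ Φ.pred i ∧ rho L Φ ht j' = s))

noncomputable def Hmap (ht : (gset Φ).card ≤ L) :
    ∀ b : Fin L, (Fin (min ((Pmap L Φ ht b).card) n) → Bool) → Bool := fun b v =>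
  if hb : (b:ℕ) < (gset Φ).card then
    if _hk : (Pmap L Φ ht b).card ≤ n then
      if hx : ∃ x : Fin n → Bool, (fun j : Fin (min ((Pmap L Φ ht b).card) n) =>
          Φ.val x (pk L Φ ht ((geq Φ) ⟨b,hb⟩ : {x // x ∈ gset Φ})
            (((Pmap L Φ ht b).orderIsoOfFin rfl
              ⟨(j:ℕ), lt_of_lt_of_le j.2 (min_le_left _ _)⟩ : {x // x ∈ Pmap L Φ ht b}) : Fin (n+2+L)))) = v
      then Φ.val hx.choose ((geq Φ) ⟨b,hb⟩ : {x // x ∈ gset Φ})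
      else false
    else Φ.val (fun jj : Fin n => v ⟨jj, by omega⟩) ((geq Φ) ⟨b,hb⟩ : {x // x ∈ gset Φ})
  else false





lemma gset_card_le (hL : Φ.size ≤ L) : (gset Φ).card ≤ L := by
  have h1 : (gset Φ).card ≤ ∑ i ∈ gset Φ, (Φ.pred i).card := by
    rw [Finset.card_eq_sum_ones]
    refine Finset.sum_le_sum (fun i hi => ?_)
    rw [gset, Finset.mem_filter] at hi
    exact Nat.one_le_iff_ne_zero.mpr (by simpa [Finset.card_eq_zero] using hi.2)
  have h2 : ∑ i ∈ gset Φ, (Φ.pred i).card ≤ ∑ i : Fin m, (Φ.pred i).card :=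
    Finset.sum_le_sum_of_subset (Finset.subset_univ _)
  exact le_trans h1 (le_trans h2 hL)

lemma not_mem_gset_lt (i : Fin m) (h : (i:ℕ) < n) : i ∉ gset Φ := by
  simp [gset, Φ.pred_input i h]

lemma val_const (i : Fin m) (hn : ¬ (i:ℕ) < n) (hg : i ∉ gset Φ) (x : Fin n → Bool) :
    Φ.val x i = Φ.val (fun _ => false) i := by
  have hp : Φ.pred i = ∅ := by
    by_contra hne; exact hg (by simp [gset, hne])
  exact Φ.val_gate i (le_of_not_gt hn) x _ (fun j hj => by simp [hp] at hj)

lemma mem_gset_not_lt (i : Fin m) (hg : i ∈ gset Φ) : n ≤ (i:ℕ) := by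
  by_contra h
  exact not_mem_gset_lt Φ i (by omega) hg


lemma rho_val_input (ht : (gset Φ).card ≤ L) (i : Fin m) (h : (i:ℕ) < n) :
    ((rho L Φ ht i) : ℕ) = (i:ℕ) := by
  rw [rho, dif_pos h]

lemma rho_val_gate (ht : (gset Φ).card ≤ L) (i : Fin m) (hg : i ∈ gset Φ) :
    ((rho L Φ ht i) : ℕ) = n + 2 + (((geq Φ).symm ⟨i,hg⟩ : Fin (gset Φ).card) : ℕ) := by
  have h : ¬ (i:ℕ) < n := not_lt.mpr (mem_gset_not_lt Φ i hg)
  rw [rho, dif_neg h, dif_pos hg]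

lemma rho_val_const (ht : (gset Φ).card ≤ L) (i : Fin m) (h : ¬ (i:ℕ) < n)
    (hg : i ∉ gset Φ) :
    ((rho L Φ ht i) : ℕ) = cond (Φ.val (fun _ => false) i) (n+1) n := by
  rw [rho, dif_neg h, dif_neg hg]
  cases hb : Φ.val (fun _ => false) i <;> simp [hb]

/-- collision lemma -/
lemma rho_eq_val (ht : (gset Φ).card ≤ L) (j j' : Fin m)
    (he : rho L Φ ht j = rho L Φ ht j') (x : Fin n → Bool) :
    Φ.val x j = Φ.val x j' := by
  have hv := congrArg Fin.val he
  by_cases h1 : (j:ℕ) < n <;> by_cases h2 : (j':ℕ) < n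
  · rw [rho_val_input L Φ ht j h1, rho_val_input L Φ ht j' h2] at hv
    rw [Fin.ext hv]
  · rw [rho_val_input L Φ ht j h1] at hv
    by_cases hg2 : j' ∈ gset Φ
    · rw [rho_val_gate L Φ ht j' hg2] at hv; omega
    · rw [rho_val_const L Φ ht j' h2 hg2] at hv
      cases hb : Φ.val (fun _ => false) j' <;> rw [hb] at hv <;> simp at hv <;> omega
  · rw [rho_val_input L Φ ht j' h2] at hv
    by_cases hg1 : j ∈ gset Φ
    · rw [rho_val_gate L Φ ht j hg1] at hv; omega
    · rw [rho_val_const L Φ ht j h1 hg1] at hv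
      cases hb : Φ.val (fun _ => false) j <;> rw [hb] at hv <;> simp at hv <;> omega
  · by_cases hg1 : j ∈ gset Φ <;> by_cases hg2 : j' ∈ gset Φ
    · rw [rho_val_gate L Φ ht j hg1, rho_val_gate L Φ ht j' hg2] at hv
      have h3 : (geq Φ).symm ⟨j, hg1⟩ = (geq Φ).symm ⟨j', hg2⟩ := Fin.ext (by omega)
      have h4 := (geq Φ).symm.injective h3
      have h5 : j = j' := congrArg Subtype.val h4
      rw [h5]
    · rw [rho_val_gate L Φ ht j hg1, rho_val_const L Φ ht j' h2 hg2] at hv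
      cases hb : Φ.val (fun _ => false) j' <;> rw [hb] at hv <;> simp at hv <;> omega
    · rw [rho_val_gate L Φ ht j' hg2, rho_val_const L Φ ht j h1 hg1] at hv
      cases hb : Φ.val (fun _ => false) j <;> rw [hb] at hv <;> simp at hv <;> omega
    · rw [rho_val_const L Φ ht j h1 hg1, rho_val_const L Φ ht j' h2 hg2] at hv
      rw [val_const Φ j h1 hg1 x, val_const Φ j' h2 hg2 x]
      cases hb : Φ.val (fun _ => false) j <;> cases hb' : Φ.val (fun _ => false) j' <;>
        rw [hb, hb'] at hv <;> simp only [cond_true, cond_false] at hv <;> first | rfl | omega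



lemma rho_pred_lt (ht : (gset Φ).card ≤ L) (i : Fin m) (hg : i ∈ gset Φ)
    (j : Fin m) (hj : j ∈ Φ.pred i) :
    ((rho L Φ ht j) : ℕ) < ((rho L Φ ht i) : ℕ) := by
  rw [rho_val_gate L Φ ht i hg]
  by_cases h1 : (j:ℕ) < n
  · rw [rho_val_input L Φ ht j h1]; omega
  · by_cases hg1 : j ∈ gset Φ
    · rw [rho_val_gate L Φ ht j hg1]
      have hji : j < i := Φ.pred_lt i j hj
      have h2 : (⟨j, hg1⟩ : {x // x ∈ gset Φ}) < ⟨i, hg⟩ := Subtype.mk_lt_mk.mpr hji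
      have h3 : (geq Φ).symm ⟨j, hg1⟩ < (geq Φ).symm ⟨i, hg⟩ :=
        (geq Φ).symm.lt_iff_lt.mpr h2
      have h4 : ((geq Φ).symm ⟨j, hg1⟩ : ℕ) < ((geq Φ).symm ⟨i, hg⟩ : ℕ) := h3
      omega
    · rw [rho_val_const L Φ ht j h1 hg1]
      cases Φ.val (fun _ => false) j <;> simp <;> omega

lemma sumP_le (ht : (gset Φ).card ≤ L) (hL : Φ.size ≤ L) :
    ∑ b : Fin L, (Pmap L Φ ht b).card ≤ L := by
  have h1 : ∀ b : Fin L, (Pmap L Φ ht b).card ≤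
      (if hb : (b:ℕ) < (gset Φ).card then
        (Φ.pred ((geq Φ) ⟨b,hb⟩ : {x // x ∈ gset Φ})).card else 0) := by
    intro b
    rw [Pmap]
    by_cases hb : (b:ℕ) < (gset Φ).card
    · rw [dif_pos hb, dif_pos hb]; exact Finset.card_image_le
    · rw [dif_neg hb, dif_neg hb]; simp
  refine le_trans (Finset.sum_le_sum (fun b _ => h1 b)) ?_
  have h2 : ∑ b : Fin L, (if hb : (b:ℕ) < (gset Φ).card then
      (Φ.pred ((geq Φ) ⟨b,hb⟩ : {x // x ∈ gset Φ})).card else 0)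
      = ∑ a : Fin (gset Φ).card, (Φ.pred ((geq Φ) a : {x // x ∈ gset Φ})).card := by
    rw [← Finset.sum_subset (Finset.subset_univ
      ((Finset.univ : Finset (Fin (gset Φ).card)).map (Fin.castLEEmb ht)))]
    · rw [Finset.sum_map]
      refine Finset.sum_congr rfl (fun a _ => ?_)
      have hlt : ((Fin.castLEEmb ht a : Fin L) : ℕ) < (gset Φ).card := a.isLt
      rw [dif_pos hlt]
      have he : (⟨((Fin.castLEEmb ht a : Fin L) : ℕ), hlt⟩ : Fin (gset Φ).card) = a :=
        Fin.ext rfl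
      rw [he]
    · intro b _ hb
      have : ¬ (b:ℕ) < (gset Φ).card := by
        intro hlt
        exact hb (by
          rw [Finset.mem_map]
          exact ⟨⟨(b:ℕ), hlt⟩, Finset.mem_univ _, Fin.ext rfl⟩)
      rw [dif_neg this]
  rw [h2]
  have h3 : ∑ a : Fin (gset Φ).card, (Φ.pred ((geq Φ) a : {x // x ∈ gset Φ})).card
      = ∑ s ∈ gset Φ, (Φ.pred s).card := by
    rw [← Finset.sum_attach (gset Φ) (fun s => (Φ.pred s).card)]
    exact Fintype.sum_equiv (geq Φ).toEquiv _ _ (fun a => rfl)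
  rw [h3]
  exact le_trans (Finset.sum_le_sum_of_subset (Finset.subset_univ _)) hL

section decVunfold

variable (P : Fin L → Finset (Fin (n+2+L)))
  (H : ∀ b : Fin L, (Fin (min ((P b).card) n) → Bool) → Bool)

lemma decV_lt (i : ℕ) (h : i < n) (x : Fin n → Bool) :
    decV n L P H i x = x ⟨i, h⟩ := by
  rw [decV]; simp [h]

lemma decV_at_n (x : Fin n → Bool) : decV n L P H n x = false := by
  rw [decV]; simp

lemma decV_at_n1 (x : Fin n → Bool) : decV n L P H (n+1) x = true := by
  rw [decV]; simp

lemma decV_gate (i : ℕ) (h1 : ¬ i < n) (h2 : i ≠ n) (h3 : i ≠ n+1)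
    (hb : i - (n+2) < L) (x : Fin n → Bool) :
    decV n L P H i x =
      H ⟨i - (n+2), hb⟩ (fun j =>
        if _hk : (P ⟨i - (n+2), hb⟩).card ≤ n then
          if _hs : ((((P ⟨i - (n+2), hb⟩).orderIsoOfFin rfl
              ⟨(j:ℕ), lt_of_lt_of_le j.2 (min_le_left _ _)⟩ : {x // x ∈ P ⟨i - (n+2), hb⟩}) :
                Fin (n+2+L)) : ℕ) < i
          then decV n L P H (((P ⟨i - (n+2), hb⟩).orderIsoOfFin rfl
              ⟨(j:ℕ), lt_of_lt_of_le j.2 (min_le_left _ _)⟩ : {x // x ∈ P ⟨i - (n+2), hb⟩}) :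
                Fin (n+2+L)) x
          else false
        else x ⟨(j:ℕ), lt_of_lt_of_le j.2 (min_le_right _ _)⟩) := by
  rw [decV]
  simp only [dif_neg h1, if_neg h2, if_neg h3, dif_pos hb]

end decVunfold


lemma decV_correct (ht : (gset Φ).card ≤ L) :
    ∀ z : ℕ, ∀ i : Fin m, (i:ℕ) ≤ z → ∀ x : Fin n → Bool,
      decV n L (Pmap L Φ ht) (Hmap L Φ ht) ((rho L Φ ht i) : ℕ) x = Φ.val x i := by
  intro z
  induction z using Nat.strong_induction_on with
  | _ z ih =>
  intro i hi x
  by_cases h1 : (i:ℕ) < n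
  · rw [rho_val_input L Φ ht i h1, decV_lt _ _ _ _ h1, Φ.val_input x i h1]
  · by_cases hg : i ∈ gset Φ
    · -- gate case
      have hval := rho_val_gate L Φ ht i hg
      have ha : (((geq Φ).symm ⟨i,hg⟩ : Fin (gset Φ).card) : ℕ) < (gset Φ).card :=
        ((geq Φ).symm ⟨i,hg⟩).isLt
      rw [hval]
      have h2 : ¬ (n+2+(((geq Φ).symm ⟨i,hg⟩ : Fin (gset Φ).card) : ℕ) < n) := by omega
      have h3 : (n+2+(((geq Φ).symm ⟨i,hg⟩ : Fin (gset Φ).card) : ℕ)) ≠ n := by omega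
      have h4 : (n+2+(((geq Φ).symm ⟨i,hg⟩ : Fin (gset Φ).card) : ℕ)) ≠ n+1 := by omega
      have hb : (n+2+(((geq Φ).symm ⟨i,hg⟩ : Fin (gset Φ).card) : ℕ)) - (n+2) < L := by omega
      rw [decV_gate _ _ _ _ h2 h3 h4 hb]
      set b : Fin L :=
        ⟨(n+2+(((geq Φ).symm ⟨i,hg⟩ : Fin (gset Φ).card) : ℕ)) - (n+2), hb⟩ with hb_def
      have hbv : (b:ℕ) = (((geq Φ).symm ⟨i,hg⟩ : Fin (gset Φ).card) : ℕ) := by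
        rw [hb_def]; exact Nat.add_sub_cancel_left _ _
      have hbt : (b:ℕ) < (gset Φ).card := by omega
      have hgeq : (((geq Φ) ⟨(b:ℕ), hbt⟩ : {x // x ∈ gset Φ}) : Fin m) = i := by
        have h5 : (⟨(b:ℕ), hbt⟩ : Fin (gset Φ).card) = (geq Φ).symm ⟨i, hg⟩ := Fin.ext hbv
        rw [h5, OrderIso.apply_symm_apply]
      have hPb : Pmap L Φ ht b = (Φ.pred i).image (rho L Φ ht) := by
        rw [Pmap, dif_pos hbt, hgeq]
      have hik : n ≤ (i:ℕ) := mem_gset_not_lt Φ i hg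
      -- the selected element map
      have F2 : ∀ j : Fin (min ((Pmap L Φ ht b).card) n),
          (((Pmap L Φ ht b).orderIsoOfFin rfl
            ⟨(j:ℕ), lt_of_lt_of_le j.2 (min_le_left _ _)⟩ : {x // x ∈ Pmap L Φ ht b}) :
              Fin (n+2+L)) ∈ (Φ.pred i).image (rho L Φ ht) := by
        intro j
        rw [← hPb]
        exact (((Pmap L Φ ht b).orderIsoOfFin rfl
          ⟨(j:ℕ), lt_of_lt_of_le j.2 (min_le_left _ _)⟩)).2
      have F3 : ∀ j : Fin (min ((Pmap L Φ ht b).card) n),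
          pk L Φ ht i (((Pmap L Φ ht b).orderIsoOfFin rfl
            ⟨(j:ℕ), lt_of_lt_of_le j.2 (min_le_left _ _)⟩ : {x // x ∈ Pmap L Φ ht b}) :
              Fin (n+2+L)) ∈ Φ.pred i ∧
          rho L Φ ht (pk L Φ ht i (((Pmap L Φ ht b).orderIsoOfFin rfl
            ⟨(j:ℕ), lt_of_lt_of_le j.2 (min_le_left _ _)⟩ : {x // x ∈ Pmap L Φ ht b}) :
              Fin (n+2+L)))
            = (((Pmap L Φ ht b).orderIsoOfFin rfl
            ⟨(j:ℕ), lt_of_lt_of_le j.2 (min_le_left _ _)⟩ : {x // x ∈ Pmap L Φ ht b}) :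
              Fin (n+2+L)) :=
        fun j => pk_spec L Φ ht i _ (F2 j)
      have F4 : ∀ j : Fin (min ((Pmap L Φ ht b).card) n),
          ((((Pmap L Φ ht b).orderIsoOfFin rfl
            ⟨(j:ℕ), lt_of_lt_of_le j.2 (min_le_left _ _)⟩ : {x // x ∈ Pmap L Φ ht b}) :
              Fin (n+2+L)) : ℕ) < n+2+(((geq Φ).symm ⟨i,hg⟩ : Fin (gset Φ).card) : ℕ) := by
        intro j
        rw [← (F3 j).2, ← hval]
        exact rho_pred_lt L Φ ht i hg _ (F3 j).1
      have F5 : ∀ j : Fin (min ((Pmap L Φ ht b).card) n),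
          decV n L (Pmap L Φ ht) (Hmap L Φ ht)
            ((((Pmap L Φ ht b).orderIsoOfFin rfl
            ⟨(j:ℕ), lt_of_lt_of_le j.2 (min_le_left _ _)⟩ : {x // x ∈ Pmap L Φ ht b}) :
              Fin (n+2+L)) : ℕ) x
          = Φ.val x (pk L Φ ht i (((Pmap L Φ ht b).orderIsoOfFin rfl
            ⟨(j:ℕ), lt_of_lt_of_le j.2 (min_le_left _ _)⟩ : {x // x ∈ Pmap L Φ ht b}) :
              Fin (n+2+L))) := by
        intro j
        conv_lhs => rw [← (F3 j).2]
        have hlt : ((pk L Φ ht i (((Pmap L Φ ht b).orderIsoOfFin rfl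
            ⟨(j:ℕ), lt_of_lt_of_le j.2 (min_le_left _ _)⟩ : {x // x ∈ Pmap L Φ ht b}) :
              Fin (n+2+L)) : Fin m) : ℕ) < (i:ℕ) := Φ.pred_lt i _ (F3 j).1
        refine ih _ ?_ _ le_rfl x
        omega
      by_cases hk : (Pmap L Φ ht b).card ≤ n
      · have harg : (fun j : Fin (min ((Pmap L Φ ht b).card) n) =>
            if _hk : (Pmap L Φ ht b).card ≤ n then
              if _hs : ((((Pmap L Φ ht b).orderIsoOfFin rfl
                  ⟨(j:ℕ), lt_of_lt_of_le j.2 (min_le_left _ _)⟩ : {x // x ∈ Pmap L Φ ht b}) :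
                    Fin (n+2+L)) : ℕ) < n+2+(((geq Φ).symm ⟨i,hg⟩ : Fin (gset Φ).card) : ℕ)
              then decV n L (Pmap L Φ ht) (Hmap L Φ ht) (((Pmap L Φ ht b).orderIsoOfFin rfl
                  ⟨(j:ℕ), lt_of_lt_of_le j.2 (min_le_left _ _)⟩ : {x // x ∈ Pmap L Φ ht b}) :
                    Fin (n+2+L)) x
              else false
            else x ⟨(j:ℕ), lt_of_lt_of_le j.2 (min_le_right _ _)⟩)
            = (fun j : Fin (min ((Pmap L Φ ht b).card) n) =>
                Φ.val x (pk L Φ ht i (((Pmap L Φ ht b).orderIsoOfFin rfl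
                  ⟨(j:ℕ), lt_of_lt_of_le j.2 (min_le_left _ _)⟩ : {x // x ∈ Pmap L Φ ht b}) :
                    Fin (n+2+L)))) := by
          funext j
          rw [dif_pos hk, dif_pos (F4 j)]
          exact F5 j
        rw [harg, Hmap, dif_pos hbt, hgeq, dif_pos hk]
        have hex : ∃ x' : Fin n → Bool, (fun j : Fin (min ((Pmap L Φ ht b).card) n) =>
            Φ.val x' (pk L Φ ht i (((Pmap L Φ ht b).orderIsoOfFin rfl
              ⟨(j:ℕ), lt_of_lt_of_le j.2 (min_le_left _ _)⟩ : {x // x ∈ Pmap L Φ ht b}) :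
                Fin (n+2+L))))
            = (fun j : Fin (min ((Pmap L Φ ht b).card) n) =>
                Φ.val x (pk L Φ ht i (((Pmap L Φ ht b).orderIsoOfFin rfl
                  ⟨(j:ℕ), lt_of_lt_of_le j.2 (min_le_left _ _)⟩ : {x // x ∈ Pmap L Φ ht b}) :
                    Fin (n+2+L)))) := ⟨x, rfl⟩
        rw [dif_pos hex]
        refine Φ.val_gate i hik _ x (fun j' hj' => ?_)
        have hspec := hex.choose_spec
        have hmem : rho L Φ ht j' ∈ Pmap L Φ ht b := by
          rw [hPb]; exact Finset.mem_image_of_mem _ hj'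
        have hjj : ((((Pmap L Φ ht b).orderIsoOfFin rfl).symm ⟨rho L Φ ht j', hmem⟩ :
            Fin (Pmap L Φ ht b).card) : ℕ) < min ((Pmap L Φ ht b).card) n := by
          have := (((Pmap L Φ ht b).orderIsoOfFin rfl).symm ⟨rho L Φ ht j', hmem⟩).isLt
          omega
        set j0 : Fin (min ((Pmap L Φ ht b).card) n) :=
          ⟨((((Pmap L Φ ht b).orderIsoOfFin rfl).symm ⟨rho L Φ ht j', hmem⟩ :
            Fin (Pmap L Φ ht b).card) : ℕ), hjj⟩ with hj0_def
        have hselt : (((Pmap L Φ ht b).orderIsoOfFin rfl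
            ⟨(j0:ℕ), lt_of_lt_of_le j0.2 (min_le_left _ _)⟩ : {x // x ∈ Pmap L Φ ht b}) :
              Fin (n+2+L)) = rho L Φ ht j' := by
          have h6 : (⟨(j0:ℕ), lt_of_lt_of_le j0.2 (min_le_left _ _)⟩ :
              Fin (Pmap L Φ ht b).card)
              = ((Pmap L Φ ht b).orderIsoOfFin rfl).symm ⟨rho L Φ ht j', hmem⟩ :=
            Fin.ext rfl
          rw [h6, OrderIso.apply_symm_apply]
        have heq := congrFun hspec j0
        have hcol : rho L Φ ht (pk L Φ ht i (((Pmap L Φ ht b).orderIsoOfFin rfl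
            ⟨(j0:ℕ), lt_of_lt_of_le j0.2 (min_le_left _ _)⟩ : {x // x ∈ Pmap L Φ ht b}) :
              Fin (n+2+L))) = rho L Φ ht j' := by
          rw [(F3 j0).2, hselt]
        calc Φ.val hex.choose j'
            = Φ.val hex.choose (pk L Φ ht i _) := (rho_eq_val L Φ ht _ j' hcol _).symm
          _ = Φ.val x (pk L Φ ht i _) := heq
          _ = Φ.val x j' := rho_eq_val L Φ ht _ j' hcol x
      · have harg : (fun j : Fin (min ((Pmap L Φ ht b).card) n) =>
            if _hk : (Pmap L Φ ht b).card ≤ n then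
              if _hs : ((((Pmap L Φ ht b).orderIsoOfFin rfl
                  ⟨(j:ℕ), lt_of_lt_of_le j.2 (min_le_left _ _)⟩ : {x // x ∈ Pmap L Φ ht b}) :
                    Fin (n+2+L)) : ℕ) < n+2+(((geq Φ).symm ⟨i,hg⟩ : Fin (gset Φ).card) : ℕ)
              then decV n L (Pmap L Φ ht) (Hmap L Φ ht) (((Pmap L Φ ht b).orderIsoOfFin rfl
                  ⟨(j:ℕ), lt_of_lt_of_le j.2 (min_le_left _ _)⟩ : {x // x ∈ Pmap L Φ ht b}) :
                    Fin (n+2+L)) x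
              else false
            else x ⟨(j:ℕ), lt_of_lt_of_le j.2 (min_le_right _ _)⟩)
            = (fun j : Fin (min ((Pmap L Φ ht b).card) n) =>
                x ⟨(j:ℕ), lt_of_lt_of_le j.2 (min_le_right _ _)⟩) := by
          funext j
          rw [dif_neg hk]
        rw [harg, Hmap, dif_pos hbt, hgeq, dif_neg hk]
    · -- constant case
      have hval := rho_val_const L Φ ht i h1 hg
      have hvc := val_const Φ i h1 hg x
      cases hc : Φ.val (fun _ => false) i
      · rw [hc] at hval
        simp only [cond_false] at hval
        rw [hval, decV_at_n, hvc, hc]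
      · rw [hc] at hval
        simp only [cond_true] at hval
        rw [hval, decV_at_n1, hvc, hc]

theorem exists_code (hL : Φ.size ≤ L) :
    ∃ (P : Fin L → Finset (Fin (n+2+L)))
      (H : ∀ b : Fin L, (Fin (min ((P b).card) n) → Bool) → Bool)
      (o : Fin n → Fin (n+2+L)),
      (∑ b : Fin L, (P b).card ≤ L) ∧
      ∀ (x : Fin n → Bool) (i : Fin n), decV n L P H ((o i):ℕ) x = Φ.val x (Φ.out i) := by
  have ht : (gset Φ).card ≤ L := gset_card_le L Φ hL
  refine ⟨Pmap L Φ ht, Hmap L Φ ht, fun i => rho L Φ ht (Φ.out i),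
    sumP_le L Φ ht hL, fun x i => ?_⟩
  exact decV_correct L Φ ht ((Φ.out i : Fin m) : ℕ) (Φ.out i) le_rfl x

end CircEnc

/-! ### Counting -/

abbrev Ptype (n L : ℕ) := {P : Fin L → Finset (Fin (n+2+L)) // ∑ b : Fin L, (P b).card ≤ L}

abbrev Code (n L : ℕ) :=
  Σ P : Ptype n L, ((∀ b : Fin L, (Fin (min ((P.1 b).card) n) → Bool) → Bool)
    × (Fin n → Fin (n+2+L)))

noncomputable def decodeOp (n L : ℕ) (c : Code n L) : (Fin n → Bool) → (Fin n → Bool) :=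
  fun x i => decV n L c.1.1 c.2.1 ((c.2.2 i) : ℕ) x

lemma ngate_ineq (n k : ℕ) : n * 2^(min k n) ≤ k * 2^n + n := by
  rcases Nat.eq_zero_or_pos k with rfl|hk
  · simp
  · rcases le_or_gt n k with h|h
    · rw [min_eq_right h]
      exact le_add_right (Nat.mul_le_mul_right _ h)
    · rw [min_eq_left h.le]
      refine le_add_right ?_
      have hd : n ≤ k * 2^(n-k) := by
        calc n = k + (n-k) := by omega
        _ ≤ k + k*(n-k) := by
            have : (n-k) ≤ k*(n-k) := Nat.le_mul_of_pos_left _ hk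
            omega
        _ = k * (1 + (n-k)) := by ring
        _ ≤ k * 2^(n-k) := Nat.mul_le_mul_left _ (by
            have := Nat.lt_two_pow_self (n := n-k)
            omega)
      calc n * 2^k ≤ (k * 2^(n-k)) * 2^k := Nat.mul_le_mul_right _ hd
      _ = k * 2^(n-k+k) := by rw [pow_add]; ring
      _ = k * 2^n := by rw [show n-k+k = n from by omega]

lemma sum_pow_min_le (n L : ℕ) (hn : 0 < n) (k : Fin L → ℕ) (hk : ∑ b, k b ≤ L) :
    ∑ b : Fin L, 2^(min (k b) n) ≤ (L * 2^n)/n + L := by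
  have h1 : n * (∑ b : Fin L, 2^(min (k b) n)) ≤ L * 2^n + L * n := by
    rw [Finset.mul_sum]
    calc ∑ b : Fin L, n * 2^(min (k b) n) ≤ ∑ b : Fin L, (k b * 2^n + n) :=
          Finset.sum_le_sum (fun b _ => ngate_ineq n (k b))
    _ = (∑ b : Fin L, k b) * 2^n + L * n := by
        rw [Finset.sum_add_distrib, ← Finset.sum_mul]
        simp [Finset.card_univ, mul_comm]
    _ ≤ L * 2^n + L * n := by
        have := Nat.mul_le_mul_right (2^n) hk
        omega
  have h2 : (∑ b : Fin L, 2^(min (k b) n)) ≤ (L * 2^n + L * n)/n :=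
    (Nat.le_div_iff_mul_le hn).mpr (by rw [mul_comm]; omega)
  calc (∑ b : Fin L, 2^(min (k b) n)) ≤ (L * 2^n + L * n)/n := h2
  _ = (L * 2^n)/n + L := by rw [Nat.add_mul_div_right _ _ hn]

/-- the wire-set of a predecessor family -/
def wset (n L : ℕ) (P : Fin L → Finset (Fin (n+2+L))) : Finset (Fin (L*(n+2+L))) :=
  Finset.univ.biUnion (fun b : Fin L => (P b).image (fun s => finProdFinEquiv (b, s)))

lemma wset_card (n L : ℕ) (P : Ptype n L) : (wset n L P.1).card ≤ L := by
  calc (wset n L P.1).card ≤ ∑ b : Fin L, ((P.1 b).image (fun s => finProdFinEquiv (b, s))).card :=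
        Finset.card_biUnion_le
  _ ≤ ∑ b : Fin L, (P.1 b).card := Finset.sum_le_sum (fun b _ => Finset.card_image_le)
  _ ≤ L := P.2

lemma mem_wset (n L : ℕ) (P : Fin L → Finset (Fin (n+2+L))) (b : Fin L) (s : Fin (n+2+L)) :
    finProdFinEquiv (b, s) ∈ wset n L P ↔ s ∈ P b := by
  constructor
  · intro h
    rw [wset, Finset.mem_biUnion] at h
    obtain ⟨b', _, hb'⟩ := h
    rw [Finset.mem_image] at hb'
    obtain ⟨s', hs', he⟩ := hb'
    have := finProdFinEquiv.injective he
    rw [Prod.mk.injEq] at this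
    rw [← this.1, ← this.2]
    exact hs'
  · intro h
    rw [wset, Finset.mem_biUnion]
    exact ⟨b, Finset.mem_univ _, Finset.mem_image_of_mem _ h⟩

noncomputable def listing (n L : ℕ) (P : Ptype n L) : Fin L → Option (Fin (L*(n+2+L))) :=
  fun j => if h : (j:ℕ) < (wset n L P.1).card then
    some (((wset n L P.1).orderIsoOfFin rfl ⟨(j:ℕ), h⟩ : {x // x ∈ wset n L P.1}) :
      Fin (L*(n+2+L)))
  else none

lemma mem_wset_iff_listing (n L : ℕ) (P : Ptype n L) (s : Fin (L*(n+2+L))) :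
    s ∈ wset n L P.1 ↔ ∃ j : Fin L, listing n L P j = some s := by
  constructor
  · intro hs
    have hc := wset_card n L P
    set jj := ((wset n L P.1).orderIsoOfFin rfl).symm ⟨s, hs⟩ with hjj
    have hjL : (jj:ℕ) < L := lt_of_lt_of_le jj.isLt hc
    refine ⟨⟨(jj:ℕ), hjL⟩, ?_⟩
    rw [listing, dif_pos (show ((⟨(jj:ℕ), hjL⟩ : Fin L) :ℕ) < (wset n L P.1).card from jj.isLt)]
    congr 1
    have h6 : (⟨((⟨(jj:ℕ), hjL⟩ : Fin L) : ℕ), jj.isLt⟩ : Fin (wset n L P.1).card) = jj :=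
      Fin.ext rfl
    rw [h6, hjj, OrderIso.apply_symm_apply]
  · rintro ⟨j, hj⟩
    rw [listing] at hj
    by_cases h : (j:ℕ) < (wset n L P.1).card
    · rw [dif_pos h] at hj
      rw [← Option.some_inj.mp hj]
      exact (((wset n L P.1).orderIsoOfFin rfl) ⟨(j:ℕ), h⟩).2
    · rw [dif_neg h] at hj; exact absurd hj (by simp)

lemma listing_injective (n L : ℕ) : Function.Injective (listing n L) := by
  intro P P' h
  have hw : wset n L P.1 = wset n L P'.1 := by
    ext s
    rw [mem_wset_iff_listing, mem_wset_iff_listing, h]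
  have hP : P.1 = P'.1 := by
    funext b
    ext s
    rw [← mem_wset n L P.1 b s, ← mem_wset n L P'.1 b s, hw]
  exact Subtype.ext hP

lemma card_Ptype_le (n L : ℕ) :
    Fintype.card (Ptype n L) ≤ (L*(n+2+L)+1)^L := by
  have h := Fintype.card_le_of_injective _ (listing_injective n L)
  calc Fintype.card (Ptype n L) ≤ Fintype.card (Fin L → Option (Fin (L*(n+2+L)))) := h
  _ = (L*(n+2+L)+1)^L := by simp [Fintype.card_fun]

lemma card_Code_le (n L : ℕ) (hn : 0 < n) :
    Fintype.card (Code n L) ≤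
      (L*(n+2+L)+1)^L * (2^((L * 2^n)/n + L) * (n+2+L)^n) := by
  rw [Fintype.card_sigma]
  have hfiber : ∀ P : Ptype n L,
      Fintype.card ((∀ b : Fin L, (Fin (min ((P.1 b).card) n) → Bool) → Bool)
        × (Fin n → Fin (n+2+L)))
      ≤ 2^((L * 2^n)/n + L) * (n+2+L)^n := by
    intro P
    rw [Fintype.card_prod]
    have h1 : Fintype.card (∀ b : Fin L, (Fin (min ((P.1 b).card) n) → Bool) → Bool)
        = 2^(∑ b : Fin L, 2^(min ((P.1 b).card) n)) := by
      rw [Fintype.card_pi]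
      rw [← Finset.prod_pow_eq_pow_sum]
      refine Finset.prod_congr rfl (fun b _ => ?_)
      simp [Fintype.card_fun]
    have h2 : Fintype.card (Fin n → Fin (n+2+L)) = (n+2+L)^n := by
      simp [Fintype.card_fun]
    rw [h1, h2]
    refine Nat.mul_le_mul_right _ (Nat.pow_le_pow_right (by norm_num) ?_)
    exact sum_pow_min_le n L hn _ P.2
  calc ∑ P : Ptype n L, Fintype.card _ ≤
      ∑ _P : Ptype n L, 2^((L * 2^n)/n + L) * (n+2+L)^n :=
        Finset.sum_le_sum (fun P _ => hfiber P)
  _ = Fintype.card (Ptype n L) * (2^((L * 2^n)/n + L) * (n+2+L)^n) := by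
      simp [Finset.sum_const, Finset.card_univ, mul_comm]
  _ ≤ (L*(n+2+L)+1)^L * (2^((L * 2^n)/n + L) * (n+2+L)^n) :=
      Nat.mul_le_mul_right _ (card_Ptype_le n L)

lemma card_op_le (n L : ℕ) (hn : 0 < n) :
    Nat.card {f : (Fin n → Bool) → (Fin n → Bool) //
        ∃ (m : ℕ) (Φ : GenCircuit n m), Φ.Computes f ∧ Φ.size ≤ L}
      ≤ (L*(n+2+L)+1)^L * (2^((L * 2^n)/n + L) * (n+2+L)^n) := by
  have hex : ∀ s : {f : (Fin n → Bool) → (Fin n → Bool) //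
      ∃ (m : ℕ) (Φ : GenCircuit n m), Φ.Computes f ∧ Φ.size ≤ L},
      ∃ c : Code n L, decodeOp n L c = s.1 := by
    rintro ⟨f, m, Φ, hcomp, hsize⟩
    obtain ⟨P, H, o, hsum, hval⟩ := CircEnc.exists_code L Φ hsize
    refine ⟨⟨⟨P, hsum⟩, (H, o)⟩, ?_⟩
    funext x i
    show decV n L P H ((o i):ℕ) x = f x i
    rw [hval x i, hcomp x i]
  choose F hF using hex
  have hinj : Function.Injective F := by
    intro s₁ s₂ h
    exact Subtype.ext (by rw [← hF s₁, ← hF s₂, h])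
  calc Nat.card _ ≤ Nat.card (Code n L) := Nat.card_le_card_of_injective F hinj
  _ = Fintype.card (Code n L) := Nat.card_eq_fintype_card
  _ ≤ _ := card_Code_le n L hn

/-! ### Real-analytic estimates -/

lemma cast_le_two_rpow {a : ℕ} {c : ℝ} (ha : 0 < a) (h : Real.logb 2 (a:ℝ) ≤ c) :
    (a:ℝ) ≤ (2:ℝ)^c := by
  have h0 : (0:ℝ) < (a:ℝ) := by exact_mod_cast ha
  calc (a:ℝ) = (2:ℝ)^(Real.logb 2 (a:ℝ)) :=
        (Real.rpow_logb (by norm_num) (by norm_num) h0).symm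
  _ ≤ (2:ℝ)^c := Real.rpow_le_rpow_of_exponent_le one_le_two h

lemma pow_le_two_rpow (a k : ℕ) (e : ℝ) (ha : (a:ℝ) ≤ (2:ℝ)^e) :
    ((a:ℝ))^(k:ℕ) ≤ (2:ℝ)^((k:ℝ)*e) := by
  calc (a:ℝ)^k ≤ ((2:ℝ)^e)^k := pow_le_pow_left₀ (by positivity) ha k
  _ = (2:ℝ)^((k:ℝ)*e) := by
      rw [← Real.rpow_natCast ((2:ℝ)^e) k, ← Real.rpow_mul (by norm_num), mul_comm]

lemma four_rpow_half (n : ℕ) : (4:ℝ)^((n:ℝ)/2) = (2:ℝ)^(n:ℕ) := by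
  have h4 : (4:ℝ) = (2:ℝ)^(2:ℝ) := by
    rw [show (2:ℝ) = ((2:ℕ):ℝ) from by norm_num, Real.rpow_natCast]
    norm_num
  rw [h4, ← Real.rpow_mul (by norm_num)]
  rw [show (2:ℝ)*((n:ℝ)/2) = (n:ℝ) from by ring]
  rw [Real.rpow_natCast]

lemma core_ineq (n L : ℕ) (hn : 2 ≤ n) (hL : L ≤ n^2) :
    (L:ℝ)*2^n/(n:ℝ) ≤ (n:ℝ)*2^(n-1) + 2*(n:ℝ)^2*(4:ℝ)^((L:ℝ)/(n:ℝ)) := by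
  have hnR : (2:ℝ) ≤ (n:ℝ) := by exact_mod_cast hn
  have hn0 : (0:ℝ) < (n:ℝ) := by linarith
  have h2n : (0:ℝ) < (2:ℝ)^n := by positivity
  have h2n1 : (2:ℝ)^n = 2*(2:ℝ)^(n-1) := by
    rw [← pow_succ']
    congr 1
    omega
  have hLR : (L:ℝ) ≤ (n:ℝ)^2 := by exact_mod_cast hL
  rcases le_or_gt (2*L) (n^2) with h|h
  · have hLn : 2*(L:ℝ) ≤ (n:ℝ)^2 := by exact_mod_cast h
    have h1 : (L:ℝ)*2^n/(n:ℝ) ≤ (n:ℝ)*2^(n-1) := by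
      rw [div_le_iff₀ hn0, h2n1]
      have h2 : (0:ℝ) < (2:ℝ)^(n-1) := by positivity
      nlinarith
    have hpos : (0:ℝ) ≤ 2*(n:ℝ)^2*(4:ℝ)^((L:ℝ)/(n:ℝ)) := by positivity
    linarith
  · have h4 : (2:ℝ)^(n:ℕ) ≤ (4:ℝ)^((L:ℝ)/(n:ℝ)) := by
      rw [← four_rpow_half n]
      refine Real.rpow_le_rpow_of_exponent_le (by norm_num) ?_
      rw [div_le_div_iff₀ (by norm_num) hn0]
      have : (n:ℝ)^2 ≤ 2*(L:ℝ) := by exact_mod_cast h.le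
      nlinarith
    have h1 : (L:ℝ)*2^n/(n:ℝ) ≤ (n:ℝ)*2^n := by
      rw [div_le_iff₀ hn0]
      nlinarith
    have h5 : (n:ℝ)*2^n ≤ 2*(n:ℝ)^2*(4:ℝ)^((L:ℝ)/(n:ℝ)) := by
      have h6' : (n:ℝ) ≤ 2*(n:ℝ)^2 := by nlinarith
      have h6 : (n:ℝ)*2^n ≤ 2*(n:ℝ)^2*(2:ℝ)^n :=
        mul_le_mul_of_nonneg_right h6' h2n.le
      have h7 : 2*(n:ℝ)^2*(2:ℝ)^n ≤ 2*(n:ℝ)^2*(4:ℝ)^((L:ℝ)/(n:ℝ)) := by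
        refine mul_le_mul_of_nonneg_left h4 (by positivity)
      linarith
    have h8 : (0:ℝ) ≤ (n:ℝ)*2^(n-1) := by positivity
    linarith

set_option maxHeartbeats 1000000 in
/-- The number of `n`-operators computable by a general circuit with at most `L` wires
is at most `2^(2n²·4^(L/n) + n·2^(n-1) + K·n²·log₂ n)`. -/
theorem card_operators_computable_with_L_wires_le :
    ∃ K : ℝ, K > 0 ∧ ∀ n ≥ 2, ∀ L : ℕ, 1 ≤ L → L ≤ n ^ 2 →
      (Nat.card {f : (Fin n → Bool) → (Fin n → Bool) //
          ∃ (m : ℕ) (Φ : GenCircuit n m), Φ.Computes f ∧ Φ.size ≤ L} : ℝ)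
        ≤ (2 : ℝ) ^ (2 * (n : ℝ) ^ 2 * (4 : ℝ) ^ ((L : ℝ) / (n : ℝ))
            + (n : ℝ) * 2 ^ (n - 1) + K * (n : ℝ) ^ 2 * Real.logb 2 n) := by
  refine ⟨20, by norm_num, ?_⟩
  intro n hn L hL1 hL2
  have hn0 : 0 < n := by omega
  have hN := card_op_le n L hn0
  have hnR : (2:ℝ) ≤ (n:ℝ) := by exact_mod_cast hn
  have hnR0 : (0:ℝ) < (n:ℝ) := by linarith
  set lg := Real.logb 2 (n:ℝ) with hlg_def
  have hlg1 : 1 ≤ lg := by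
    rw [hlg_def, show (1:ℝ) = Real.logb 2 2 from by simp]
    exact Real.logb_le_logb_of_le (by norm_num) (by norm_num) hnR
  have hlg0 : 0 ≤ lg := by linarith
  -- nat size bounds
  have e1 : n ≤ n^2 := by nlinarith
  have e2 : 4 ≤ n^2 := by nlinarith
  have hM3 : n+2+L ≤ 3*n^2 := by omega
  have hM4 : n+2+L ≤ n^4 := by nlinarith
  have hLM8 : L*(n+2+L)+1 ≤ n^8 := by
    have a1 : L*(n+2+L) ≤ n^2*(3*n^2) := Nat.mul_le_mul hL2 hM3
    have a2 : 16 ≤ n^2*n^2 := by nlinarith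
    nlinarith
  -- real factor bounds
  have hApos : 0 < L*(n+2+L)+1 := by omega
  have hA : ((L*(n+2+L)+1 : ℕ):ℝ) ≤ (2:ℝ)^(8*lg) := by
    refine cast_le_two_rpow hApos ?_
    have c1 : ((L*(n+2+L)+1 : ℕ):ℝ) ≤ ((n:ℝ))^(8:ℕ) := by exact_mod_cast hLM8
    calc Real.logb 2 ((L*(n+2+L)+1 : ℕ):ℝ) ≤ Real.logb 2 ((n:ℝ)^(8:ℕ)) :=
          Real.logb_le_logb_of_le (by norm_num) (by exact_mod_cast hApos) c1
    _ = 8*lg := by rw [Real.logb_pow]; norm_num; exact hlg_def.symm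
  have hC : ((n+2+L : ℕ):ℝ) ≤ (2:ℝ)^(4*lg) := by
    refine cast_le_two_rpow (by omega) ?_
    have c1 : ((n+2+L : ℕ):ℝ) ≤ ((n:ℝ))^(4:ℕ) := by exact_mod_cast hM4
    calc Real.logb 2 ((n+2+L : ℕ):ℝ) ≤ Real.logb 2 ((n:ℝ)^(4:ℕ)) :=
          Real.logb_le_logb_of_le (by norm_num) (by exact_mod_cast (show 0 < n+2+L by omega)) c1
    _ = 4*lg := by rw [Real.logb_pow]; norm_num; exact hlg_def.symm
  have factA : (((L*(n+2+L)+1 : ℕ)):ℝ)^(L:ℕ) ≤ (2:ℝ)^((L:ℝ)*(8*lg)) :=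
    pow_le_two_rpow _ _ _ hA
  have factC : (((n+2+L : ℕ)):ℝ)^(n:ℕ) ≤ (2:ℝ)^((n:ℝ)*(4*lg)) :=
    pow_le_two_rpow _ _ _ hC
  set B := (L * 2^n)/n + L with hB_def
  -- cast the nat bound
  have hNR : (Nat.card {f : (Fin n → Bool) → (Fin n → Bool) //
      ∃ (m : ℕ) (Φ : GenCircuit n m), Φ.Computes f ∧ Φ.size ≤ L} : ℝ)
      ≤ (((L*(n+2+L)+1 : ℕ)):ℝ)^(L:ℕ) * ((2:ℝ)^(B:ℕ) * (((n+2+L : ℕ)):ℝ)^(n:ℕ)) := by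
    have h0 : ((((L*(n+2+L)+1)^L * (2^B * (n+2+L)^n) : ℕ)):ℝ)
        = (((L*(n+2+L)+1 : ℕ)):ℝ)^(L:ℕ) * ((2:ℝ)^(B:ℕ) * (((n+2+L : ℕ)):ℝ)^(n:ℕ)) := by
      push_cast
      ring
    rw [← h0]
    exact_mod_cast hN
  have factB : (2:ℝ)^(B:ℕ) = (2:ℝ)^((B:ℕ):ℝ) := (Real.rpow_natCast 2 B).symm
  have hprod : (((L*(n+2+L)+1 : ℕ)):ℝ)^(L:ℕ) * ((2:ℝ)^(B:ℕ) * (((n+2+L : ℕ)):ℝ)^(n:ℕ))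
      ≤ (2:ℝ)^((L:ℝ)*(8*lg) + (((B:ℕ):ℝ) + (n:ℝ)*(4*lg))) := by
    rw [Real.rpow_add (by norm_num), Real.rpow_add (by norm_num)]
    refine mul_le_mul factA ?_ (by positivity) (by positivity)
    refine mul_le_mul (le_of_eq factB) factC (by positivity) (by positivity)
  -- exponent comparison
  have hBle : ((B:ℕ):ℝ) ≤ (L:ℝ)*2^n/(n:ℝ) + (L:ℝ) := by
    rw [hB_def]
    push_cast
    have := Nat.cast_div_le (m := L * 2^n) (n := n) (α := ℝ)
    push_cast at this
    linarith
  have hcore := core_ineq n L hn hL2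
  have hLR : (L:ℝ) ≤ (n:ℝ)^2 := by exact_mod_cast hL2
  have hnn : (n:ℝ) ≤ (n:ℝ)^2 := by nlinarith
  have p1 : (L:ℝ)*lg ≤ (n:ℝ)^2*lg := mul_le_mul_of_nonneg_right hLR hlg0
  have p2 : (n:ℝ)*lg ≤ (n:ℝ)^2*lg := mul_le_mul_of_nonneg_right hnn hlg0
  have p3 : (n:ℝ)^2 ≤ (n:ℝ)^2*lg := by nlinarith
  have hexp : (L:ℝ)*(8*lg) + (((B:ℕ):ℝ) + (n:ℝ)*(4*lg))
      ≤ 2 * (n : ℝ) ^ 2 * (4 : ℝ) ^ ((L : ℝ) / (n : ℝ))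
        + (n : ℝ) * 2 ^ (n - 1) + 20 * (n : ℝ) ^ 2 * lg := by
    have hn2lg0 : (0:ℝ) ≤ (n:ℝ)^2*lg := by positivity
    linarith [hBle, hcore, p1, p2, p3, hn2lg0]
  calc (Nat.card {f : (Fin n → Bool) → (Fin n → Bool) //
      ∃ (m : ℕ) (Φ : GenCircuit n m), Φ.Computes f ∧ Φ.size ≤ L} : ℝ)
      ≤ (((L*(n+2+L)+1 : ℕ)):ℝ)^(L:ℕ) * ((2:ℝ)^(B:ℕ) * (((n+2+L : ℕ)):ℝ)^(n:ℕ)) := hNR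
  _ ≤ (2:ℝ)^((L:ℝ)*(8*lg) + (((B:ℕ):ℝ) + (n:ℝ)*(4*lg))) := hprod
  _ ≤ (2:ℝ)^(2 * (n : ℝ) ^ 2 * (4 : ℝ) ^ ((L : ℝ) / (n : ℝ))
        + (n : ℝ) * 2 ^ (n - 1) + 20 * (n : ℝ) ^ 2 * lg) :=
      Real.rpow_le_rpow_of_exponent_le one_le_two hexp
end

section
/- Let n, r : ℕ, A : Matrix (Fin n) (Fin n) (ZMod 2), C : Matrix (Fin n) (Fin r) (ZMod 2), and h : (Fin n → ZMod 2) → (Fin r → ZMod 2). If A.mulVec x = C.mulVec (h x) for all x : Fin n → ZMod 2, then also A.mulVec x = C.mulVec (∑ i, x i • h (Pi.single i 1)) for all x; that is, replacing h by the linear operator h'(x) = ∑ i, x i • h(eᵢ) (where eᵢ is the i-th unit vector) leaves the computed operator unchanged. -/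
open Matrix

/-- Linearization step: if a depth-2 circuit with linear output gates computes the
linear operator `x ↦ A.mulVec x`, then replacing the middle-layer operator `h` by the
linear operator `x ↦ ∑ i, x i • h eᵢ` leaves the computed operator unchanged. -/
theorem replace_middle_by_linear (n r : ℕ) (A : Matrix (Fin n) (Fin n) (ZMod 2))
    (C : Matrix (Fin n) (Fin r) (ZMod 2)) (h : (Fin n → ZMod 2) → (Fin r → ZMod 2))
    (hcomp : ∀ x : Fin n → ZMod 2, A.mulVec x = C.mulVec (h x)) :
    ∀ x : Fin n → ZMod 2,
      A.mulVec x = C.mulVec (∑ i : Fin n, x i • h (Pi.single i 1)) := by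
  intro x
  have h1 : C.mulVec (∑ i : Fin n, x i • h (Pi.single i 1))
      = ∑ i : Fin n, x i • C.mulVec (h (Pi.single i 1)) := by
    rw [show C.mulVec = (Matrix.mulVecLin C : (Fin r → ZMod 2) → _) from rfl]
    simp [map_sum, _root_.map_smul]
  rw [h1]
  simp_rw [← hcomp]
  have h2 : ∑ i : Fin n, x i • A.mulVec (Pi.single i 1)
      = A.mulVec (∑ i : Fin n, x i • Pi.single i 1) := by
    rw [show A.mulVec = (Matrix.mulVecLin A : (Fin n → ZMod 2) → _) from rfl]
    simp [map_sum, _root_.map_smul]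
  have h3 : (∑ i : Fin n, x i • Pi.single i 1) = x := by
    ext j
    simp [Pi.single_apply]
  rw [h2, h3]
end
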